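/- Suppose γ : ℝ → ℂ is measurable with |γ(σ)| ≤ F·(1+σ²)^{K/2} for σ ≥ 0, where F > 0 and K ≥ 0. Then there exist R > 0 and Σ_0 > 0 such that for all Σ > Σ_0 and all t ∈ ℂ with Re t < 0, |∫_0^Σ γ(σ) e^{-σt} dσ| ≤ R·F·|Re t|^{-1}·e^{Σ·|Re t|}·Σ^K. -/

import Mathlib

open MeasureTheory

/-- Bound for the truncated Laplace transform on the left half-plane: for
`Re t < 0` and large `Σ`, `|∫_0^Σ γ(σ)e^{-σt}dσ| ≤ R·F·|Re t|⁻¹·e^{Σ|Re t|}·Σ^K`. -/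
theorem truncated_laplace_left_halfplane_bound (K F : ℝ) (hK : 0 ≤ K) (hF : 0 < F)
    (γ : ℝ → ℂ) (hmeas : Measurable γ)
    (hbd : ∀ σ : ℝ, 0 ≤ σ → ‖γ σ‖ ≤ F * (1 + σ ^ 2) ^ (K / 2)) :
    ∃ R : ℝ, 0 < R ∧ ∃ S₀ : ℝ, 0 < S₀ ∧ ∀ S : ℝ, S₀ < S → ∀ t : ℂ, t.re < 0 →
      ‖∫ σ in (0 : ℝ)..S, γ σ * Complex.exp (-(σ : ℂ) * t)‖ ≤
        R * F * |t.re|⁻¹ * Real.exp (S * |t.re|) * S ^ K := by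
  refine ⟨2 ^ (K / 2), by positivity, 1, one_pos, ?_⟩
  intro S hS t ht
  have hS0 : (0 : ℝ) < S := lt_trans one_pos hS
  set a : ℝ := |t.re| with ha
  have ha0 : 0 < a := abs_pos.mpr (ne_of_lt ht)
  have hare : t.re = -a := by
    rw [ha, abs_of_neg ht]; ring
  set C : ℝ := 2 ^ (K / 2) * F * S ^ K with hC
  have hCpos : 0 < C := by positivity
  have hg : IntervalIntegrable (fun σ : ℝ => C * Real.exp (σ * a)) volume 0 S :=
    (Continuous.mul continuous_const ((Real.continuous_exp).comp
      (continuous_id.mul continuous_const))).intervalIntegrable _ _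
  have hbound : ∀ σ ∈ Set.uIoc (0 : ℝ) S,
      ‖γ σ * Complex.exp (-(σ : ℂ) * t)‖ ≤ C * Real.exp (σ * a) := by
    intro σ hσ
    rw [Set.uIoc_of_le hS0.le] at hσ
    have hσ0 : 0 ≤ σ := le_of_lt hσ.1
    have hσS : σ ≤ S := hσ.2
    rw [norm_mul]
    have hexp : ‖Complex.exp (-(σ : ℂ) * t)‖ = Real.exp (σ * a) := by
      rw [Complex.norm_exp]
      congr 1
      simp [hare]
    rw [hexp]
    have h1 : ‖γ σ‖ ≤ F * (1 + σ ^ 2) ^ (K / 2) := hbd σ hσ0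
    have h2 : (1 + σ ^ 2 : ℝ) ^ (K / 2) ≤ (2 * S ^ 2) ^ (K / 2) := by
      apply Real.rpow_le_rpow (by positivity) _ (by positivity)
      nlinarith [sq_nonneg σ, sq_nonneg (S - σ)]
    have h3 : ((2 : ℝ) * S ^ 2) ^ (K / 2) = 2 ^ (K / 2) * S ^ K := by
      rw [Real.mul_rpow (by norm_num) (by positivity)]
      congr 1
      rw [← Real.rpow_natCast S 2, ← Real.rpow_mul hS0.le]
      norm_num
      congr 1
      ring
    have : ‖γ σ‖ ≤ C := by
      calc ‖γ σ‖ ≤ F * (1 + σ ^ 2) ^ (K / 2) := h1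
        _ ≤ F * (2 ^ (K / 2) * S ^ K) := by rw [← h3]; exact mul_le_mul_of_nonneg_left h2 hF.le
        _ = C := by rw [hC]; ring
    exact mul_le_mul this le_rfl (Real.exp_nonneg _) hCpos.le
  have key := intervalIntegral.norm_integral_le_abs_of_norm_le
    (f := fun σ : ℝ => γ σ * Complex.exp (-(σ : ℂ) * t))
    (g := fun σ : ℝ => C * Real.exp (σ * a)) ?_ hg
  · have hint : (∫ σ in (0:ℝ)..S, C * Real.exp (σ * a)) =
        C * ((Real.exp (S * a) - 1) / a) := by
      rw [intervalIntegral.integral_const_mul]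
      congr 1
      have := intervalIntegral.integral_comp_mul_right (a := (0:ℝ)) (b := S)
        (fun x => Real.exp x) (ne_of_gt ha0)
      rw [this]
      simp [integral_exp, smul_eq_mul]
      ring
    rw [hint] at key
    have habs : |C * ((Real.exp (S * a) - 1) / a)| = C * ((Real.exp (S * a) - 1) / a) := by
      apply abs_of_nonneg
      have h0 : (0 : ℝ) ≤ Real.exp (S * a) - 1 := by
        linarith [Real.one_le_exp (show (0:ℝ) ≤ S * a by positivity)]
      positivity
    rw [habs] at key
    refine key.trans ?_
    have hfin : C * ((Real.exp (S * a) - 1) / a) ≤ C * (Real.exp (S * a) / a) := by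
      apply mul_le_mul_of_nonneg_left _ hCpos.le
      gcongr
      linarith [Real.exp_pos (S * a)]
    refine hfin.trans (le_of_eq ?_)
    rw [hC]
    field_simp
  · filter_upwards [ae_restrict_mem measurableSet_uIoc] with σ hσ
    exact hbound σ hσ
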